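/- Let X be a Hilbert space, T ∈ B(X) with a {1,3,7}-inverse S, and δT ∈ B(X) with I + S·δT invertible. The following are equivalent: (i) R(T + δT) ⊆ R(T); (ii) R(T + δT) = R(T); (iii) TS(T + δT) = T + δT; (iv) TS·δT = δT. -/

import Mathlib

theorem stmt_15 {X : Type*} [NormedAddCommGroup X] [InnerProductSpace ℂ X]
    [CompleteSpace X] (T S δT : X →L[ℂ] X)
    (h1 : T * S * T = T)
    (h3 : ContinuousLinearMap.adjoint (T * S) = T * S)
    (h7 : T * S * S = S)
    (hinv : IsUnit (1 + S * δT)) :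
    [LinearMap.range ((T + δT : X →L[ℂ] X) : X →ₗ[ℂ] X) ≤ LinearMap.range (T : X →ₗ[ℂ] X),
     LinearMap.range ((T + δT : X →L[ℂ] X) : X →ₗ[ℂ] X) = LinearMap.range (T : X →ₗ[ℂ] X),
     T * S * (T + δT) = T + δT,
     T * S * δT = δT].TFAE := by
  tfae_have 2 → 1 := fun h => le_of_eq h
  tfae_have 1 → 3 := by
    intro h
    ext x
    obtain ⟨y, hy⟩ := h ⟨x, rfl⟩
    simp only [ContinuousLinearMap.coe_coe] at hy
    have : (T * S * (T + δT)) x = (T * S) ((T + δT) x) := rfl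
    rw [this, ← hy]
    have : (T * S) (T y) = (T * S * T) y := rfl
    rw [this, h1]
  tfae_have 3 → 4 := by
    intro h
    have h' : T * S * T + T * S * δT = T + δT := by rw [← mul_add]; exact h
    rw [h1] at h'
    exact add_left_cancel h'
  tfae_have 4 → 3 := by
    intro h
    rw [mul_add, h1, h]
  tfae_have 4 → 2 := by
    intro h
    have key : T + δT = T * (1 + S * δT) := by
      rw [mul_add, mul_one, ← mul_assoc, h]
    obtain ⟨u, hu⟩ := hinv
    apply le_antisymm
    · rintro _ ⟨x, rfl⟩
      exact ⟨(1 + S * δT) x, by rw [key]; rfl⟩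
    · rintro _ ⟨x, rfl⟩
      refine ⟨(↑u⁻¹ : X →L[ℂ] X) x, ?_⟩
      rw [key]
      show (T * (1 + S * δT) * (↑u⁻¹ : X →L[ℂ] X)) x = T x
      rw [mul_assoc, ← hu, u.mul_inv, mul_one]
  tfae_finish
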